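/- Let x be a binary string of length m with run-length structure given by runs of 1's and 0's, and define ρ_1(x) and ρ_0(x) as follows: ρ_α(x) is the sum over all maximal runs r of symbol α in x of f(r), where f(r) = |r|+1 if r spans all of x, f(r) = |r| if r touches exactly one endpoint of x, and f(r) = |r|−1 otherwise. Then for n ≥ m, the number of y ∈ {0,1}^n with ω_x(y) = 1 (singletons) equals binomial(n − m + ρ_1(x) + ρ_0(x) − 1, n − m). -/

import Mathlib

open List

/-- number of embeddings of `x` into `y` as a subsequence -/
def omg : List Bool → List Bool → ℕ
  | [], _ => 1
  | _ :: _, [] => 0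
  | a :: x, b :: y => omg (a :: x) y + if a = b then omg x y else 0

private lemma sum_ite_count (x : List Bool) :
    ∀ (L : List (List Bool)), (L.map (fun s => if s = x then 1 else 0)).sum = L.count x := by
  intro L
  induction L with
  | nil => simp
  | cons s L ih => simp [count_cons, ih]; omega

lemma count_sublists_eq_omg : ∀ (y x : List Bool), y.sublists.count x = omg x y := by
  intro y
  induction y with
  | nil => intro x; cases x <;> simp [omg, sublists_nil]
  | cons b y ih =>
    intro x
    rw [sublists_cons]
    have h1 : (do let s ← y.sublists; [s, b :: s]) = y.sublists.flatMap (fun s => [s, b :: s]) := rfl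
    rw [h1, count_flatMap]
    have h2 : (map (count x ∘ fun s => [s, b :: s]) y.sublists).sum
        = (map (fun s => (if s = x then 1 else 0) + (if b :: s = x then 1 else 0)) y.sublists).sum := by
      congr 1
      apply map_congr_left
      intro s _
      simp [Function.comp, count_cons]
      omega
    rw [h2]
    have h3 : (map (fun s => (if s = x then 1 else 0) + (if b :: s = x then 1 else 0)) y.sublists).sum
        = (map (fun s => if s = x then 1 else 0) y.sublists).sum
          + (map (fun s => if b :: s = x then 1 else 0) y.sublists).sum := by
      rw [← sum_map_add]
    rw [h3, sum_ite_count, ih]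
    cases x with
    | nil =>
      have : (map (fun s => if b :: s = ([] : List Bool) then 1 else 0) y.sublists).sum = 0 := by
        simp
      simp [this, omg]
    | cons a x' =>
      by_cases hab : a = b
      · subst hab
        have : (map (fun s => if a :: s = a :: x' then 1 else 0) y.sublists).sum
            = (map (fun s => if s = x' then 1 else 0) y.sublists).sum := by
          congr 1; apply map_congr_left; intro s _; simp
        rw [this, sum_ite_count, ih]
        simp [omg]
      · have : (map (fun s => if b :: s = a :: x' then 1 else 0) y.sublists).sum = 0 := by
          have : b ≠ a := fun h => hab h.symm
          simp [this]
        rw [this]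
        simp [omg, hab]


lemma omg_nil (y : List Bool) : omg [] y = 1 := by cases y <;> rfl

lemma omg_nil' (a : Bool) (x : List Bool) : omg (a :: x) [] = 0 := rfl

lemma omg_cons (a : Bool) (x : List Bool) (b : Bool) (y : List Bool) :
    omg (a :: x) (b :: y) = omg (a :: x) y + if a = b then omg x y else 0 := rfl

lemma omg_pos_iff : ∀ (y x : List Bool), 0 < omg x y ↔ x <+ y := by
  intro y
  induction y with
  | nil =>
    intro x; cases x with
    | nil => simp [omg]
    | cons a x => simp [omg]
  | cons b y ih =>
    intro x; cases x with
    | nil => simp [omg]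
    | cons a x =>
      simp only [omg]
      constructor
      · intro h
        by_cases hab : a = b
        · subst hab
          rw [if_pos rfl] at h
          have : 0 < omg (a :: x) y ∨ 0 < omg x y := by omega
          rcases this with h' | h'
          · exact ((ih (a :: x)).1 h').cons a
          · exact ((ih x).1 h').cons₂ a
        · rw [if_neg hab] at h
          simp at h
          exact ((ih (a :: x)).1 h).cons b
      · intro h
        cases h with
        | cons _ h => have := (ih (a :: x)).2 h; omega
        | cons_cons _ h => have := (ih x).2 h; rw [if_pos rfl]; omega

lemma omg_eq_zero_iff (y x : List Bool) : omg x y = 0 ↔ ¬ x <+ y := by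
  rw [← omg_pos_iff]; omega

lemma omg_two : ∀ (y : List Bool) (a : Bool) (x : List Bool),
    (a :: a :: x) <+ y → 2 ≤ omg (a :: x) y := by
  intro y
  induction y with
  | nil => intro a x h; simp at h
  | cons b y ih =>
    intro a x h
    cases h with
    | cons _ h =>
      have := ih a x h
      simp only [omg]
      omega
    | cons_cons _ h =>
      simp only [omg, if_true]
      have h1 : 0 < omg (b :: x) y := (omg_pos_iff y (b :: x)).2 h
      have h2 : 0 < omg x y := (omg_pos_iff y x).2 ((sublist_cons_self b x).trans h)
      omega

/-- parse states for strings with a unique embedding -/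
inductive TT : Bool → List Bool → List Bool → Prop
  | nil (prev) : TT prev [] []
  | pad {prev x y} (h : x = [] ∨ ∃ x', x = prev :: x') : TT prev x y → TT prev x ((!prev) :: y)
  | step {prev x y} (b) : TT b x y → TT prev (b :: x) (b :: y)

lemma cons_sublist_of_ne {a c : Bool} {l y : List Bool} (h : a ≠ c) :
    a :: l <+ c :: y ↔ a :: l <+ y := by
  constructor
  · intro hs
    cases hs with
    | cons _ hs => exact hs
    | cons_cons _ hs => exact absurd rfl h
  · exact fun hs => hs.cons c


lemma TT_cons_inv {prev c : Bool} {x y : List Bool} (h : TT prev x (c :: y)) :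
    (c = !prev ∧ (x = [] ∨ ∃ x', x = prev :: x') ∧ TT prev x y) ∨
    (∃ x', x = c :: x' ∧ TT c x' y) := by
  generalize hy : c :: y = z at h
  cases h with
  | nil => exact absurd hy (by simp)
  | pad hx ht =>
    rw [List.cons.injEq] at hy
    exact Or.inl ⟨hy.1, hx, by rw [hy.2]; exact ht⟩
  | step b ht =>
    rw [List.cons.injEq] at hy
    rename_i x0 y0
    refine Or.inr ⟨x0, by rw [hy.1], ?_⟩
    rw [hy.1, hy.2]; exact ht

lemma TT_iff : ∀ (y : List Bool) (prev : Bool) (x : List Bool),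
    (omg x y = 1 ∧ ¬ (prev :: x) <+ y) ↔ TT prev x y := by
  intro y
  induction y with
  | nil =>
    intro prev x
    constructor
    · rintro ⟨h1, -⟩
      cases x with
      | nil => exact TT.nil prev
      | cons a x => rw [omg_nil'] at h1; omega
    · intro h
      cases h with
      | nil => exact ⟨omg_nil [], by simp⟩
  | cons c y ih =>
    intro prev x
    cases x with
    | nil =>
      constructor
      · rintro ⟨-, h2⟩
        rw [singleton_sublist] at h2
        simp only [mem_cons] at h2
        push_neg at h2
        have hc : c = !prev := by
          cases prev <;> cases c <;> simp_all
        subst hc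
        exact TT.pad (Or.inl rfl) ((ih prev []).1 ⟨omg_nil y, by simpa [singleton_sublist] using h2.2⟩)
      · intro h
        refine ⟨omg_nil _, ?_⟩
        rcases TT_cons_inv h with ⟨hc, -, ht⟩ | ⟨x', hx', -⟩
        · have := ((ih prev []).2 ht).2
          rw [singleton_sublist] at this ⊢
          subst hc
          simp [this]
        · exact absurd hx' (by simp)
    | cons b x' =>
      rw [omg_cons]
      by_cases hcb : b = c
      · subst hcb
        rw [if_pos rfl]
        by_cases hpb : prev = b
        · subst hpb
          constructor
          · rintro ⟨h1, h2⟩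
            rw [cons_sublist_cons] at h2
            have h0 : omg (prev :: x') y = 0 := (omg_eq_zero_iff y _).2 h2
            exact TT.step prev ((ih prev x').1 ⟨by omega, h2⟩)
          · intro h
            rcases TT_cons_inv h with ⟨hc, -, -⟩ | ⟨x'', hx'', ht⟩
            · exact absurd hc (by simp)
            · obtain ⟨rfl⟩ : x' = x'' := by injection hx''
              obtain ⟨h1, h2⟩ := (ih prev x').2 ht
              have h0 : omg (prev :: x') y = 0 := (omg_eq_zero_iff y _).2 h2
              exact ⟨by omega, by rw [cons_sublist_cons]; exact h2⟩
        · have hne : prev ≠ b := hpb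
          constructor
          · rintro ⟨h1, h2⟩
            have hx' : omg (b :: x') y = 0 := by
              by_contra h0
              have hpos : 0 < omg (b :: x') y := by omega
              have hs : (b :: x') <+ y := (omg_pos_iff y _).1 hpos
              have hs' : x' <+ y := (sublist_cons_self b x').trans hs
              have : 0 < omg x' y := (omg_pos_iff y x').2 hs'
              omega
            have hx2 : omg x' y = 1 := by omega
            have hns : ¬ (b :: x') <+ y := (omg_eq_zero_iff y _).1 hx'
            exact TT.step b ((ih b x').1 ⟨hx2, hns⟩)
          · intro h
            rcases TT_cons_inv h with ⟨-, (h | ⟨x'', hx''⟩), -⟩ | ⟨x'', hx'', ht⟩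
            · exact absurd h (by simp)
            · have : b = prev := by injection hx''
              exact absurd this.symm hne
            · obtain ⟨rfl⟩ : x' = x'' := by injection hx''
              obtain ⟨h1, h2⟩ := (ih b x').2 ht
              have h0 : omg (b :: x') y = 0 := (omg_eq_zero_iff y _).2 h2
              refine ⟨by omega, ?_⟩
              rw [cons_sublist_of_ne hne]
              intro hs
              exact h2 ((sublist_cons_self prev (b :: x')).trans hs)
      · rw [if_neg hcb]
        by_cases hpc : prev = c
        · subst hpc
          constructor
          · rintro ⟨h1, h2⟩
            rw [cons_sublist_cons] at h2
            have h0 : omg (b :: x') y = 0 := (omg_eq_zero_iff y _).2 h2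
            omega
          · intro h
            rcases TT_cons_inv h with ⟨hc, -, -⟩ | ⟨x'', hx'', -⟩
            · exact absurd hc (by simp)
            · have : b = prev := by injection hx''
              exact absurd this hcb
        · have hpb : prev = b := by
            cases prev <;> cases b <;> cases c <;> simp_all
          subst hpb
          have hc : c = !prev := by cases prev <;> cases c <;> simp_all
          constructor
          · rintro ⟨h1, h2⟩
            rw [cons_sublist_of_ne hpc] at h2
            rw [add_zero] at h1
            subst hc
            exact TT.pad (Or.inr ⟨x', rfl⟩) ((ih prev (prev :: x')).1 ⟨h1, h2⟩)
          · intro h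
            rcases TT_cons_inv h with ⟨-, -, ht⟩ | ⟨x'', hx'', -⟩
            · obtain ⟨h1, h2⟩ := (ih prev (prev :: x')).2 ht
              exact ⟨by omega, by rw [cons_sublist_of_ne hpc]; exact h2⟩
            · have : prev = c := by injection hx''
              exact absurd this hpc


lemma singleton_iff (a0 : Bool) (x' y : List Bool) :
    omg (a0 :: x') y = 1 ↔ TT a0 (a0 :: x') y := by
  rw [← TT_iff]
  constructor
  · intro h
    refine ⟨h, fun hs => ?_⟩
    have := omg_two y a0 x' hs
    omega
  · intro h
    exact h.1

lemma TT_length {prev : Bool} {x y : List Bool} (h : TT prev x y) : x.length ≤ y.length := by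
  induction h with
  | nil => simp
  | pad _ _ ih => simp; omega
  | step _ _ ih => simp; omega

lemma TT_nil_iff : ∀ (y : List Bool) (prev : Bool),
    TT prev [] y ↔ y = replicate y.length (!prev) := by
  intro y
  induction y with
  | nil => intro prev; simp [TT.nil]
  | cons c y ih =>
    intro prev
    constructor
    · intro h
      rcases TT_cons_inv h with ⟨hc, -, ht⟩ | ⟨x', hx', -⟩
      · subst hc
        simp [replicate_succ]
        exact (ih prev).1 ht
      · exact absurd hx' (by simp)
    · intro h
      simp [replicate_succ] at h
      obtain ⟨rfl, h2⟩ := h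
      exact TT.pad (Or.inl rfl) ((ih prev).2 h2)

lemma rep_cons_inj : ∀ (d d' : ℕ) (c : Bool) (z z' : List Bool),
    replicate d (!c) ++ c :: z = replicate d' (!c) ++ c :: z' → d = d' ∧ z = z' := by
  intro d
  induction d with
  | zero =>
    intro d' c z z' h
    cases d' with
    | zero => simpa using h
    | succ d' =>
      simp [replicate_succ] at h
  | succ d ih =>
    intro d' c z z' h
    cases d' with
    | zero =>
      simp [replicate_succ] at h
    | succ d' =>
      simp only [replicate_succ, cons_append, List.cons.injEq] at h
      obtain ⟨d_eq, z_eq⟩ := ih d' c z z' h.2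
      exact ⟨by omega, z_eq⟩

/-- the slot count -/
def ee : Bool → List Bool → ℕ
  | _, [] => 1
  | prev, b :: x => (if b = prev then 1 else 0) + ee b x

lemma ee_pos : ∀ x prev, 1 ≤ ee prev x := by
  intro x
  induction x with
  | nil => intro prev; simp [ee]
  | cons b x ih => intro prev; simp only [ee]; have := ih b; omega

instance finTT (n : ℕ) (P : List Bool → Prop) : Finite {y : List Bool // y.length = n ∧ P y} := by
  have hsub : {y : List Bool | y.length = n ∧ P y} ⊆ {y | y.length = n} := fun y h => h.1
  exact ((List.finite_length_eq Bool n).subset hsub).to_subtype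

lemma natcard_sigma {k : ℕ} (β : Fin k → Type) [∀ d, Finite (β d)] :
    Nat.card (Σ d, β d) = ∑ d, Nat.card (β d) := by
  classical
  letI : ∀ d, Fintype (β d) := fun d => Fintype.ofFinite (β d)
  simp [Nat.card_eq_fintype_card, Fintype.card_sigma]

lemma TT_pad_rep : ∀ (d : ℕ) {prev : Bool} {x z : List Bool},
    TT prev x z → TT prev (prev :: x) (replicate d (!prev) ++ prev :: z) := by
  intro d
  induction d with
  | zero => intro prev x z h; exact TT.step prev h
  | succ d ih =>
    intro prev x z h
    rw [replicate_succ, cons_append]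
    exact TT.pad (Or.inr ⟨x, rfl⟩) (ih h)

lemma TT_parse : ∀ (y : List Bool) {prev : Bool} {x : List Bool},
    TT prev (prev :: x) y → ∃ d z, y = replicate d (!prev) ++ prev :: z ∧ TT prev x z := by
  intro y
  induction y with
  | nil => intro prev x h; have := TT_length h; simp at this
  | cons c y ih =>
    intro prev x h
    rcases TT_cons_inv h with ⟨hc, -, ht⟩ | ⟨x', hx', ht⟩
    · obtain ⟨d, z, rfl, hz⟩ := ih ht
      exact ⟨d + 1, z, by rw [hc, replicate_succ, cons_append], hz⟩
    · obtain ⟨hcp, hx⟩ : prev = c ∧ x = x' := by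
        constructor <;> injection hx' <;> assumption
      subst hcp hx
      exact ⟨0, y, by simp, ht⟩

lemma card_TT : ∀ (x : List Bool) (prev : Bool) (n : ℕ), x.length ≤ n →
    Nat.card {y : List Bool // y.length = n ∧ TT prev x y}
      = (n - x.length + ee prev x - 1).choose (n - x.length) := by
  intro x
  induction x with
  | nil =>
    intro prev n _
    have h1 : Nat.card {y : List Bool // y.length = n ∧ TT prev [] y} = 1 := by
      rw [Nat.card_eq_one_iff_unique]
      constructor
      · constructor
        intro ⟨y₁, hy₁, ht₁⟩ ⟨y₂, hy₂, ht₂⟩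
        have e₁ := (TT_nil_iff y₁ prev).1 ht₁
        have e₂ := (TT_nil_iff y₂ prev).1 ht₂
        apply Subtype.ext
        simp only
        rw [e₁, e₂, hy₁, hy₂]
      · exact ⟨⟨replicate n (!prev), by simp, (TT_nil_iff _ _).2 (by simp)⟩⟩
    rw [h1]
    simp [ee]
  | cons b x'' ih =>
    intro prev n hn
    simp only [length_cons] at hn
    by_cases hbp : b = prev
    · subst hbp
      set t := n - 1 - x''.length with ht
      have hteq : n - (b :: x'').length = t := by simp [ht]; omega
      set f : (Σ _d : Fin (t + 1), {z : List Bool // z.length = n - 1 - _d.1 ∧ TT b x'' z})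
          → {y : List Bool // y.length = n ∧ TT b (b :: x'') y} := fun p =>
        ⟨replicate p.1.1 (!b) ++ b :: p.2.1, by
          have hd := p.1.2
          have hz := p.2.2.1
          have hl := TT_length p.2.2.2
          simp only [length_append, length_replicate, length_cons]
          omega, TT_pad_rep p.1.1 p.2.2.2⟩ with hf
      have hbij : Function.Bijective f := by
        constructor
        · rintro ⟨d₁, z₁⟩ ⟨d₂, z₂⟩ he
          simp only [hf, Subtype.mk.injEq] at he
          obtain ⟨hd, hz⟩ := rep_cons_inj d₁.1 d₂.1 b z₁.1 z₂.1 he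
          have hd' : d₁ = d₂ := Fin.ext hd
          subst hd'
          congr 1
          exact Subtype.ext hz
        · rintro ⟨y, hy, ht'⟩
          obtain ⟨d, z, rfl, hz⟩ := TT_parse y ht'
          have hlz := TT_length hz
          have hylen : d + 1 + z.length = n := by
            simp [length_append] at hy; omega
          have hd : d < t + 1 := by omega
          refine ⟨⟨⟨d, hd⟩, ⟨z, ?_, hz⟩⟩, rfl⟩
          show z.length = n - 1 - d
          omega
      rw [← Nat.card_eq_of_bijective f hbij, natcard_sigma]
      have hfib : ∀ d : Fin (t + 1),
          Nat.card {z : List Bool // z.length = n - 1 - d.1 ∧ TT b x'' z}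
            = (t - d.1 + ee b x'' - 1).choose (t - d.1) := by
        intro d
        have hd := d.2
        have hle : x''.length ≤ n - 1 - d.1 := by omega
        rw [ih b (n - 1 - d.1) hle]
        have h1 : n - 1 - d.1 - x''.length = t - d.1 := by omega
        rw [h1]
      rw [Finset.sum_congr rfl (fun d _ => hfib d)]
      rw [Fin.sum_univ_eq_sum_range (fun d => (t - d + ee b x'' - 1).choose (t - d)) (t + 1)]
      have hre : ∀ d ∈ Finset.range (t + 1),
          (t - d + ee b x'' - 1).choose (t - d) = (t + 1 - 1 - d + ee b x'' - 1).choose (t + 1 - 1 - d) := by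
        intro d hd; congr 1 <;> omega
      rw [Finset.sum_congr rfl hre]
      rw [Finset.sum_range_reflect (fun j => (j + ee b x'' - 1).choose j) (t + 1)]
      -- now: ∑ j in range (t+1), (j + s' - 1).choose j = (t + s').choose t
      set s' := ee b x'' with hs'
      have hs'pos := ee_pos x'' b
      have hsymm : ∀ j, (j + s' - 1).choose j = (s' - 1 + j).choose (s' - 1) := by
        intro j
        have h2 : j + s' - 1 = s' - 1 + j := by omega
        rw [h2]
        have := Nat.choose_symm (n := s' - 1 + j) (k := s' - 1) (by omega)
        rw [← this]
        congr 1
        omega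
      calc ∑ j ∈ Finset.range (t + 1), (j + s' - 1).choose j
          = ∑ j ∈ Finset.range (t + 1), (s' - 1 + j).choose (s' - 1) := by
            exact Finset.sum_congr rfl (fun j _ => hsymm j)
        _ = ∑ m ∈ Finset.Icc (s' - 1) (s' - 1 + t), m.choose (s' - 1) := by
            rw [show Finset.Icc (s' - 1) (s' - 1 + t) = Finset.Ico (s' - 1) (s' - 1 + t + 1) by
              rw [Finset.Ico_add_one_right_eq_Icc]]
            rw [Finset.sum_Ico_eq_sum_range]
            have h5 : s' - 1 + t + 1 - (s' - 1) = t + 1 := by omega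
            rw [h5]
        _ = (s' - 1 + t + 1).choose (s' - 1 + 1) := Nat.sum_Icc_choose _ _
        _ = (t + s').choose s' := by congr 1 <;> omega
        _ = (n - (b :: x'').length + ee b (b :: x'') - 1).choose (n - (b :: x'').length) := by
            have h3 : ee b (b :: x'') = 1 + s' := by simp [ee, hs']
            rw [hteq, h3]
            have h4 : t + (1 + s') - 1 = t + s' := by omega
            rw [h4]
            have := Nat.choose_symm (n := t + s') (k := s') (by omega)
            rw [← this]
            congr 1
            omega
    · set f : {z : List Bool // z.length = n - 1 ∧ TT b x'' z}
          → {y : List Bool // y.length = n ∧ TT prev (b :: x'') y} := fun z =>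
        ⟨b :: z.1, by simp only [length_cons, z.2.1]; omega, TT.step b z.2.2⟩ with hf
      have hbij : Function.Bijective f := by
        constructor
        · rintro ⟨z₁, h₁⟩ ⟨z₂, h₂⟩ he
          simp only [hf, Subtype.mk.injEq, List.cons.injEq] at he
          exact Subtype.ext he.2
        · rintro ⟨y, hy, ht'⟩
          cases y with
          | nil => simp at hy; omega
          | cons c y' =>
            rcases TT_cons_inv ht' with ⟨-, (h | ⟨x₀, hx₀⟩), -⟩ | ⟨x₀, hx₀, htz⟩
            · exact absurd h (by simp)
            · have : b = prev := by injection hx₀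
              exact absurd this hbp
            · obtain ⟨hcb, hx⟩ : b = c ∧ x'' = x₀ := by
                refine ⟨?_, ?_⟩ <;> injection hx₀ <;> assumption
              subst hcb
              subst hx
              have hy' : y'.length = n - 1 := by simp at hy; omega
              exact ⟨⟨y', hy', htz⟩, rfl⟩
      rw [← Nat.card_eq_of_bijective f hbij, ih b (n - 1) (by omega)]
      have h1 : n - 1 - x''.length = n - (b :: x'').length := by simp; omega
      have h2 : ee prev (b :: x'') = ee b x'' := by simp [ee, hbp]
      rw [h1, h2]

lemma ee_rep : ∀ (j : ℕ) (prev c : Bool) (rest : List Bool),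
    ee prev (replicate (j + 1) c ++ rest)
      = (if c = prev then 1 else 0) + j + ee c rest := by
  intro j
  induction j with
  | zero => intro prev c rest; simp [ee]
  | succ j ih =>
    intro prev c rest
    rw [replicate_succ, cons_append]
    show (if c = prev then 1 else 0) + ee c (replicate (j + 1) c ++ rest) = _
    rw [ih c c rest]
    simp
    omega

lemma ee_flatten : ∀ (L : List (Bool × ℕ)) (prev : Bool),
    (∀ p ∈ L, 1 ≤ p.2) → L.Chain' (fun p q => p.1 ≠ q.1) →
    ee prev ((L.map fun p => replicate p.2 p.1).flatten)
      = (match L.head? with | none => 0 | some p => if p.1 = prev then 1 else 0)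
        + (L.map (fun p => p.2 - 1)).sum + 1 := by
  intro L
  induction L with
  | nil => intro prev _ _; simp [ee]
  | cons p L ih =>
    intro prev hpos hchain
    obtain ⟨c, kk⟩ := p
    obtain ⟨j, rfl⟩ : ∃ j, kk = j + 1 := ⟨kk - 1, by have := hpos (c, kk) (by simp); omega⟩
    simp only [map_cons, flatten_cons]
    rw [ee_rep j prev c _]
    rw [ih c (fun q hq => hpos q (by simp [hq])) hchain.tail]
    have hhead : (match L.head? with | none => 0 | some p => if p.1 = c then 1 else 0) = 0 := by
      cases L with
      | nil => simp
      | cons q L' =>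
        have hne : c ≠ q.1 := (isChain_cons_cons.1 hchain).1
        simp only [head?_cons]
        exact if_neg (fun h => hne h.symm)
    rw [hhead]
    simp only [head?_cons, map_cons, sum_cons]
    omega

theorem singleton_count (ℓ : ℕ) (hl : 1 ≤ ℓ) (a : Fin ℓ → Bool) (k : Fin ℓ → ℕ)
    (halt : ∀ i : Fin ℓ, ∀ h : i.1 + 1 < ℓ, a i ≠ a ⟨i.1 + 1, h⟩)
    (hk : ∀ i, 1 ≤ k i) (m n : ℕ) (hm : ∑ i, k i = m) (hmn : m ≤ n)
    (x : List Bool) (hx : x = (List.ofFn fun i => List.replicate (k i) (a i)).flatten)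
    (ρ : Bool → ℕ)
    (hρ : ∀ b : Bool, ρ b = ∑ i ∈ Finset.univ.filter (fun i : Fin ℓ => a i = b),
        (if ℓ = 1 then k i + 1 else if i.1 = 0 ∨ i.1 = ℓ - 1 then k i else k i - 1)) :
    Nat.card {y : List Bool // y.length = n ∧ y.sublists.count x = 1} =
      (n - m + ρ true + ρ false - 1).choose (n - m) := by
  classical
  obtain ⟨ℓ', rfl⟩ : ∃ ℓ', ℓ = ℓ' + 1 := ⟨ℓ - 1, by omega⟩
  -- the run-pair list
  set L : List (Bool × ℕ) := List.ofFn (fun i : Fin (ℓ' + 1) => (a i, k i)) with hL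
  have hxL : x = (L.map fun p => replicate p.2 p.1).flatten := by
    rw [hx, hL, List.map_ofFn]
    rfl
  -- x starts with a 0
  have hx0 : ∃ x', x = a 0 :: x' := by
    rw [hx, List.ofFn_succ]
    obtain ⟨j, hj⟩ : ∃ j, k 0 = j + 1 := ⟨k 0 - 1, by have := hk 0; omega⟩
    exact ⟨replicate j (a 0) ++ (List.ofFn fun i : Fin ℓ' => replicate (k i.succ) (a i.succ)).flatten,
      by rw [flatten_cons, hj, replicate_succ, cons_append]⟩
  obtain ⟨x', hx'⟩ := hx0
  have hml : ℓ' + 1 ≤ m := by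
    rw [← hm]
    calc (ℓ' + 1 : ℕ) = ∑ _i : Fin (ℓ' + 1), 1 := by simp
      _ ≤ ∑ i, k i := Finset.sum_le_sum (fun i _ => hk i)
  have hgap : ∑ i, (k i - 1) = m - (ℓ' + 1) := by
    have h1 : ∑ i, k i = ∑ i, ((k i - 1) + 1) := by
      apply Finset.sum_congr rfl
      intro i _
      have := hk i
      omega
    rw [Finset.sum_add_distrib] at h1
    simp at h1
    omega
  -- length of x is m
  have hxlen : x.length = m := by
    rw [hx, length_flatten, List.map_ofFn]
    have h2 : (length ∘ fun i : Fin (ℓ' + 1) => replicate (k i) (a i)) = fun i => k i := by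
      funext i
      simp
    rw [h2, List.sum_ofFn, hm]
  -- ee computation
  have hchain : L.Chain' (fun p q => p.1 ≠ q.1) := by
    rw [hL, List.Chain', List.isChain_iff_getElem]
    intro i hi
    simp only [List.length_ofFn] at hi
    rw [List.getElem_ofFn, List.getElem_ofFn]
    simp only [ne_eq]
    intro hcontr
    have h2 : i + 1 < ℓ' + 1 := by omega
    exact halt ⟨i, by omega⟩ (by simpa using h2) (by
      convert hcontr using 2 <;> simp [Fin.ext_iff])
  have hpos : ∀ p ∈ L, 1 ≤ p.2 := by
    intro p hp
    rw [hL, List.mem_ofFn] at hp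
    obtain ⟨i, rfl⟩ := hp
    exact hk i
  have hsum : (L.map (fun p => p.2 - 1)).sum = m - (ℓ' + 1) := by
    rw [hL, List.map_ofFn]
    have h2 : ((fun p : Bool × ℕ => p.2 - 1) ∘ fun i : Fin (ℓ' + 1) => (a i, k i))
        = fun i => k i - 1 := rfl
    rw [h2, List.sum_ofFn, hgap]
  have hee : ee (a 0) x = m - (ℓ' + 1) + 2 := by
    rw [hxL, ee_flatten L (a 0) hpos hchain]
    have hhead : L.head? = some (a 0, k 0) := by
      rw [hL, List.ofFn_succ]; rfl
    rw [hhead, hsum]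
    simp
    omega
  -- ρ computation
  have hρsum : ρ true + ρ false = m - (ℓ' + 1) + 2 := by
    rw [hρ true, hρ false]
    have hff : Finset.filter (fun i : Fin (ℓ' + 1) => a i = false) Finset.univ
        = Finset.filter (fun i : Fin (ℓ' + 1) => ¬ (a i = true)) Finset.univ := by
      apply Finset.filter_congr
      intro i _
      cases a i <;> simp
    rw [hff, Finset.sum_filter_add_sum_filter_not]
    rcases Nat.eq_zero_or_pos ℓ' with rfl | hℓ'
    · rw [Fin.sum_univ_one, if_pos rfl]
      have := hk 0
      have h0 : ∑ i : Fin 1, k i = k 0 := Fin.sum_univ_one k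
      rw [h0] at hm
      omega
    · have hne1 : ℓ' + 1 ≠ 1 := by omega
      have hterm : ∀ i : Fin (ℓ' + 1),
          (if ℓ' + 1 = 1 then k i + 1 else if i.1 = 0 ∨ i.1 = ℓ' + 1 - 1 then k i else k i - 1)
            = (k i - 1) + (if i.1 = 0 ∨ i.1 = ℓ' then 1 else 0) := by
        intro i
        rw [if_neg hne1]
        by_cases h : i.1 = 0 ∨ i.1 = ℓ'
        · have h'' : i.1 = 0 ∨ i.1 = ℓ' + 1 - 1 := by simpa using h
          rw [if_pos h'', if_pos h]
          have := hk i
          omega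
        · have h' : ¬ (i.1 = 0 ∨ i.1 = ℓ' + 1 - 1) := by simpa using h
          rw [if_neg h', if_neg h]
          omega
      rw [Finset.sum_congr rfl (fun i _ => hterm i), Finset.sum_add_distrib, hgap]
      have hcard2 : ∑ i : Fin (ℓ' + 1), (if i.1 = 0 ∨ i.1 = ℓ' then 1 else 0) = 2 := by
        rw [Finset.sum_boole]
        have hfe : Finset.filter (fun i : Fin (ℓ' + 1) => i.1 = 0 ∨ i.1 = ℓ') Finset.univ
            = {(⟨0, by omega⟩ : Fin (ℓ' + 1)), ⟨ℓ', by omega⟩} := by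
          ext i
          simp only [Finset.mem_filter, Finset.mem_univ, true_and, Finset.mem_insert, Finset.mem_singleton, Fin.ext_iff]
        rw [hfe, Finset.card_pair (by simp [Fin.ext_iff]; omega)]
        rfl
      rw [hcard2]
  -- main count
  have hcard : ∀ y : List Bool, (y.sublists.count x = 1) ↔ TT (a 0) x y := by
    intro y
    rw [count_sublists_eq_omg, hx', singleton_iff]
  have := finTT
  calc Nat.card {y : List Bool // y.length = n ∧ y.sublists.count x = 1}
      = Nat.card {y : List Bool // y.length = n ∧ TT (a 0) x y} := by
        apply Nat.card_congr
        apply Equiv.subtypeEquivRight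
        intro y
        rw [and_congr_right_iff]
        exact fun _ => hcard y
    _ = (n - x.length + ee (a 0) x - 1).choose (n - x.length) :=
        card_TT x (a 0) n (by omega)
    _ = (n - m + ρ true + ρ false - 1).choose (n - m) := by
        rw [hxlen, hee]
        congr 1
        omega
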